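/- Suppose, in addition to the standing combinatorial setup, that w_0 is submodular (w_0(ℓ) + w_0(ℓ') ≥ w_0(min(ℓ,ℓ')) + w_0(max(ℓ,ℓ')) for all ℓ, ℓ', with coordinatewise min and max), that |m| = 4, and that there are pairwise distinct indices i, j, k ∈ {1, …, r} with w_0(m + e^i + e^j) = −2 and w_0(m + e^j + e^k) = −2. Then w_0(m + e^i + e^j + e^k) ≤ −3. -/

import Mathlib

/-- Auxiliary: on a nonzero vector below `m`, the Hilbert function is 1. -/
lemma aux_h_eq_one
    (r : ℕ)
    (S : AddSubmonoid (Fin r → ℕ))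
    (h : (Fin r → ℕ) → ℕ)
    (h0 : h 0 = 0)
    (hstep_pos : ∀ (ℓ : Fin r → ℕ) (i : Fin r),
      (∃ s ∈ S, s i = ℓ i ∧ ∀ j, j ≠ i → ℓ j ≤ s j) →
        h (ℓ + Pi.single i 1) = h ℓ + 1)
    (hstep_neg : ∀ (ℓ : Fin r → ℕ) (i : Fin r),
      ¬ (∃ s ∈ S, s i = ℓ i ∧ ∀ j, j ≠ i → ℓ j ≤ s j) →
        h (ℓ + Pi.single i 1) = h ℓ)
    (m : Fin r → ℕ)
    (hSm : ∀ s ∈ S, s ≠ 0 → m ≤ s) :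
    ∀ n (ℓ : Fin r → ℕ), (∑ x, ℓ x) = n → ℓ ≠ 0 → ℓ ≤ m → h ℓ = 1 := by
  intro n
  induction n with
  | zero =>
      intro ℓ hsum hne _
      exfalso; apply hne; funext x
      have := Finset.sum_eq_zero_iff.mp hsum x (Finset.mem_univ x)
      simpa using this
  | succ n ih =>
      intro ℓ hsum hne hle
      -- pick a coordinate where ℓ is positive
      obtain ⟨i, hi⟩ : ∃ i, 0 < ℓ i := by
        by_contra hc
        push_neg at hc
        exact hne (funext fun x => Nat.le_zero.mp (hc x))
      set ℓ' : Fin r → ℕ := ℓ - Pi.single i 1 with hℓ'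
      have hℓeq : ℓ = ℓ' + Pi.single i 1 := by
        funext x
        simp only [hℓ', Pi.add_apply, Pi.sub_apply, Pi.single_apply]
        rcases eq_or_ne x i with rfl | hx
        · simp; omega
        · simp [hx]
      have hsum' : (∑ x, ℓ' x) = n := by
        have : (∑ x, ℓ x) = (∑ x, ℓ' x) + 1 := by
          rw [hℓeq]
          simp only [Pi.add_apply]
          rw [Finset.sum_add_distrib, Finset.sum_pi_single']
          simp
        omega
      rcases Nat.eq_zero_or_pos n with rfl | hn
      · -- ℓ' = 0, so ℓ = e^i; one positive step from 0
        have hz : ℓ' = 0 := by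
          funext x
          have := Finset.sum_eq_zero_iff.mp hsum' x (Finset.mem_univ x)
          simpa using this
        rw [hℓeq, hz]
        have := hstep_pos 0 i ⟨0, S.zero_mem, by simp⟩
        rw [zero_add] at this ⊢
        rw [this, h0]
      · -- ℓ' ≠ 0; the step from ℓ' to ℓ is a negative step
        have hne' : ℓ' ≠ 0 := by
          intro hz
          rw [hz] at hsum'; simp at hsum'; omega
        have hle' : ℓ' ≤ m := fun x => le_trans (by simp [hℓ']) (hle x)
        have hΔ : ¬ (∃ s ∈ S, s i = ℓ' i ∧ ∀ x, x ≠ i → ℓ' x ≤ s x) := by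
          rintro ⟨s, hsS, hsi, hsx⟩
          rcases eq_or_ne s 0 with rfl | hs0
          · apply hne'
            funext x
            rcases eq_or_ne x i with rfl | hx
            · simpa using hsi.symm
            · simpa using hsx x hx
          · have hms := hSm s hsS hs0
            have h1 : m i ≤ s i := hms i
            have h2 : ℓ' i < ℓ i := by
              have : ℓ' i = ℓ i - 1 := by
                simp [hℓ', Pi.single_eq_same]
              omega
            have h3 : ℓ i ≤ m i := hle i
            omega
        rw [hℓeq, hstep_neg ℓ' i hΔ]
        exact ih ℓ' hsum' hne' hle'

/-- if `w₀` is submodular, `|m| = 4`, and there are pairwise distinct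
indices `i j k` with `w₀(m + eⁱ + eʲ) = -2 = w₀(m + eʲ + eᵏ)`, then
`w₀(m + eⁱ + eʲ + eᵏ) ≤ -3`. -/
theorem weight_triple_cube_bound
    (r : ℕ) (hr : 1 ≤ r)
    (S : AddSubmonoid (Fin r → ℕ))
    (h : (Fin r → ℕ) → ℕ)
    (h0 : h 0 = 0)
    (hstep_pos : ∀ (ℓ : Fin r → ℕ) (i : Fin r),
      (∃ s ∈ S, s i = ℓ i ∧ ∀ j, j ≠ i → ℓ j ≤ s j) →
        h (ℓ + Pi.single i 1) = h ℓ + 1)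
    (hstep_neg : ∀ (ℓ : Fin r → ℕ) (i : Fin r),
      ¬ (∃ s ∈ S, s i = ℓ i ∧ ∀ j, j ≠ i → ℓ j ≤ s j) →
        h (ℓ + Pi.single i 1) = h ℓ)
    (w0 : (Fin r → ℕ) → ℤ)
    (hw0 : ∀ ℓ, w0 ℓ = 2 * (h ℓ : ℤ) - ∑ i, (ℓ i : ℤ))
    (m : Fin r → ℕ) (hm : ∀ i, 1 ≤ m i) (hmS : m ∈ S)
    (hSm : ∀ s ∈ S, s ≠ 0 → m ≤ s)
    (hsub : ∀ ℓ ℓ' : Fin r → ℕ, w0 (ℓ ⊓ ℓ') + w0 (ℓ ⊔ ℓ') ≤ w0 ℓ + w0 ℓ')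
    (hm4 : (∑ i, m i) = 4)
    (i j k : Fin r) (hij : i ≠ j) (hjk : j ≠ k) (hik : i ≠ k)
    (h1 : w0 (m + Pi.single i 1 + Pi.single j 1) = -2)
    (h2 : w0 (m + Pi.single j 1 + Pi.single k 1) = -2) :
    w0 (m + Pi.single i 1 + Pi.single j 1 + Pi.single k 1) ≤ -3 := by
  have hmne : m ≠ 0 := by
    intro hz
    have := hm ⟨0, hr⟩
    rw [hz] at this; simp at this
  have hhm : h m = 1 :=
    aux_h_eq_one r S h h0 hstep_pos hstep_neg m hSm (∑ x, m x) m rfl hmne le_rfl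
  have hhmj : h (m + Pi.single j 1) = 2 := by
    rw [hstep_pos m j ⟨m, hmS, rfl, fun x _ => le_rfl⟩, hhm]
  -- weight of m + e^j
  have hwmj : w0 (m + Pi.single j 1) = -1 := by
    rw [hw0, hhmj]
    have hs5 : (∑ x : Fin r, (((m + Pi.single j 1 : Fin r → ℕ) x : ℕ) : ℤ)) = 5 := by
      simp only [Pi.add_apply]
      push_cast
      rw [Finset.sum_add_distrib]
      have h1' : (∑ x : Fin r, ((Pi.single j 1 : Fin r → ℕ) x : ℤ)) = 1 := by
        simp [Pi.single_apply]
      have hms : (∑ x : Fin r, ((m x : ℕ) : ℤ)) = 4 := by exact_mod_cast hm4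
      rw [h1', hms]; norm_num
    rw [hs5]; norm_num
  -- lattice identities
  have hinf : (m + Pi.single i 1 + Pi.single j 1) ⊓ (m + Pi.single j 1 + Pi.single k 1)
      = m + Pi.single j 1 := by
    funext x
    simp only [Pi.inf_apply, Pi.add_apply, Pi.single_apply]
    rcases eq_or_ne x i with rfl | hxi
    · simp [hij, hik]
    · rcases eq_or_ne x k with rfl | hxk
      · simp [hik.symm, hjk.symm]
      · simp [hxi, hxk]
  have hsup : (m + Pi.single i 1 + Pi.single j 1) ⊔ (m + Pi.single j 1 + Pi.single k 1)
      = m + Pi.single i 1 + Pi.single j 1 + Pi.single k 1 := by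
    funext x
    simp only [Pi.sup_apply, Pi.add_apply, Pi.single_apply]
    rcases eq_or_ne x i with rfl | hxi
    · simp [hij, hik]
    · rcases eq_or_ne x k with rfl | hxk
      · simp [hik.symm, hjk.symm]
      · simp [hxi, hxk]
  have := hsub (m + Pi.single i 1 + Pi.single j 1) (m + Pi.single j 1 + Pi.single k 1)
  rw [hinf, hsup, hwmj, h1, h2] at this
  omega
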